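/- Let p be an odd prime. Then there exist three quadratic forms Q_0, Q_+, Q_- on the group ℤ/p such that every quadratic form Q on ℤ/p is isomorphic to one of Q_0, Q_+, Q_-. Explicitly, one may take Q_0(1) = 0, Q_+(1) = 2/p, and Q_-(1) = 2p_- /p, where p_- is a fixed quadratic non-residue modulo p. -/

import Mathlib

set_option maxHeartbeats 1000000


/-- The map `ℚ/ℤ → ℚ/2ℤ` induced by multiplication by `2`. -/
def QZtoQ2Z : AddCircle (1 : ℚ) →+ AddCircle (2 : ℚ) :=
  QuotientAddGroup.map (AddSubgroup.zmultiples (1 : ℚ)) (AddSubgroup.zmultiples (2 : ℚ))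
    (AddMonoidHom.mk' (fun q : ℚ => 2 * q) (fun a b => by ring))
    (by
      intro x hx
      obtain ⟨k, hk⟩ := AddSubgroup.mem_zmultiples_iff.mp hx
      rw [AddSubgroup.mem_comap]
      exact AddSubgroup.mem_zmultiples_iff.mpr
        ⟨k, by simp only [AddMonoidHom.mk'_apply, ← hk, zsmul_eq_mul]; ring⟩)

/-- A quadratic form on a finite abelian group `A`: a function `Q : A → ℚ/2ℤ` with
`Q (n • a) = n² • Q a` for which there is a symmetric biadditive `B : A × A → ℚ/ℤ`
with `Q (a + b) = Q a + Q b + 2·B a b`. -/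
def IsQuadraticForm {A : Type} [AddCommGroup A] (Q : A → AddCircle (2 : ℚ)) : Prop :=
  (∀ (n : ℤ) (a : A), Q (n • a) = (n ^ 2) • Q a) ∧
  ∃ B : A → A → AddCircle (1 : ℚ),
    (∀ a b : A, B a b = B b a) ∧
    (∀ a b c : A, B (a + b) c = B a c + B b c) ∧
    (∀ a b : A, Q (a + b) = Q a + Q b + QZtoQ2Z (B a b))

/-- Let `p` be an odd prime.  There are three quadratic forms `Q₀`, `Q₊`, `Q₋` on
`ℤ/p`, with `Q₀ 1 = 0`, `Q₊ 1 = 2/p`, `Q₋ 1 = 2p₋/p` for a quadratic non-residue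
`p₋` mod `p`, such that every quadratic form on `ℤ/p` is isomorphic to one of them. -/

lemma coe_zsmul' (c : ℚ) (n : ℤ) (q : ℚ) :
    n • ((q : AddCircle c)) = ((n * q : ℚ) : AddCircle c) := by
  rw [← zsmul_eq_mul]
  exact ((QuotientAddGroup.mk' (AddSubgroup.zmultiples c)).map_zsmul n q).symm

lemma mkQ2_eq (p : ℕ) [NeZero p] (q r : ℚ) (k m : ℤ) (hq : q = 2*k/p) (hr : r = 2*m/p)
    (h : (k : ZMod p) = (m : ZMod p)) :
    ((q : AddCircle (2:ℚ))) = ((r : AddCircle (2:ℚ))) := by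
  subst hq hr
  obtain ⟨t, ht⟩ : (p:ℤ) ∣ k - m := (ZMod.intCast_zmod_eq_zero_iff_dvd _ p).mp (by push_cast [h]; ring)
  have hp : (p:ℚ) ≠ 0 := Nat.cast_ne_zero.mpr (NeZero.ne p)
  have hk : (k:ℚ) = m + p * t := by exact_mod_cast (by omega : (k:ℤ) = m + p*t)
  have key : (2*(k:ℚ)/p : ℚ) = 2*m/p + t • (2:ℚ) := by rw [hk, zsmul_eq_mul]; field_simp
  rw [key, AddCircle.coe_add]
  have h3 : ((t • (2:ℚ) : ℚ) : AddCircle (2:ℚ)) = t • (((2:ℚ)) : AddCircle (2:ℚ)) :=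
    (QuotientAddGroup.mk' _).map_zsmul t (2:ℚ)
  rw [h3, AddCircle.coe_period, smul_zero, add_zero]

lemma mkQ1_eq (p : ℕ) [NeZero p] (q r : ℚ) (k m : ℤ) (hq : q = k/p) (hr : r = m/p)
    (h : (k : ZMod p) = (m : ZMod p)) :
    ((q : AddCircle (1:ℚ))) = ((r : AddCircle (1:ℚ))) := by
  subst hq hr
  obtain ⟨t, ht⟩ : (p:ℤ) ∣ k - m := (ZMod.intCast_zmod_eq_zero_iff_dvd _ p).mp (by push_cast [h]; ring)
  have hp : (p:ℚ) ≠ 0 := Nat.cast_ne_zero.mpr (NeZero.ne p)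
  have hk : (k:ℚ) = m + p * t := by exact_mod_cast (by omega : (k:ℤ) = m + p*t)
  have key : ((k:ℚ)/p : ℚ) = m/p + t • (1:ℚ) := by rw [hk, zsmul_eq_mul]; field_simp
  rw [key, AddCircle.coe_add]
  have h3 : ((t • (1:ℚ) : ℚ) : AddCircle (1:ℚ)) = t • (((1:ℚ)) : AddCircle (1:ℚ)) :=
    (QuotientAddGroup.mk' _).map_zsmul t (1:ℚ)
  rw [h3, AddCircle.coe_period, smul_zero, add_zero]

lemma torsion_rep (c : ℚ) (n : ℤ) (hn : (n:ℚ) ≠ 0) (x : AddCircle c) (h : n • x = 0) :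
    ∃ k : ℤ, x = ((k * c / n : ℚ) : AddCircle c) := by
  obtain ⟨q, rfl⟩ : ∃ q : ℚ, x = q := ⟨x.out, (QuotientAddGroup.out_eq' x).symm⟩
  rw [coe_zsmul'] at h
  obtain ⟨k, hk⟩ := AddSubgroup.mem_zmultiples_iff.mp ((QuotientAddGroup.eq_zero_iff _).mp h)
  refine ⟨k, ?_⟩
  congr 1
  rw [zsmul_eq_mul] at hk
  field_simp; ring
  linear_combination -hk

lemma cast_valZ (p : ℕ) [NeZero p] (x : ZMod p) : (((x.val : ℤ) : ZMod p)) = x := by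
  simp [ZMod.natCast_val, ZMod.cast_id]
lemma QZtoQ2Z_coe (q : ℚ) : QZtoQ2Z ((q : AddCircle (1:ℚ))) = ((2*q : ℚ) : AddCircle (2:ℚ)) := rfl

def QQ (p : ℕ) (d : ℤ) (x : ZMod p) : AddCircle (2:ℚ) :=
  ((2 * (d * (x.val : ℤ)^2) / p : ℚ) : AddCircle (2:ℚ))

lemma QQ_isQF (p : ℕ) [NeZero p] (d : ℤ) : IsQuadraticForm (QQ p d) := by
  constructor
  · intro n a
    rw [QQ, QQ, coe_zsmul']
    exact mkQ2_eq p _ _ (d * (((n • a).val : ℤ))^2) (n^2 * d * ((a.val:ℤ))^2)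
      (by push_cast; ring) (by push_cast; ring)
      (by push_cast [ZMod.natCast_val, ZMod.cast_id, zsmul_eq_mul]; ring)
  · refine ⟨fun a b => (((2 * d * (a.val:ℤ) * (b.val:ℤ)) / p : ℚ) : AddCircle (1:ℚ)), ?_, ?_, ?_⟩
    · intro a b
      exact mkQ1_eq p _ _ (2*d*(a.val:ℤ)*(b.val:ℤ)) (2*d*(b.val:ℤ)*(a.val:ℤ))
        (by push_cast; ring) (by push_cast; ring) (by push_cast; ring)
    · intro a b c
      rw [← AddCircle.coe_add]
      exact mkQ1_eq p _ _ (2*d*(((a+b).val:ℤ))*(c.val:ℤ)) (2*d*(a.val:ℤ)*(c.val:ℤ) + 2*d*(b.val:ℤ)*(c.val:ℤ))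
        (by push_cast; ring) (by push_cast; ring)
        (by push_cast [ZMod.natCast_val, ZMod.cast_id]; ring)
    · intro a b
      rw [QZtoQ2Z_coe, QQ, QQ, QQ, ← AddCircle.coe_add, ← AddCircle.coe_add]
      exact mkQ2_eq p _ _ (d * (((a+b).val:ℤ))^2) (d*(a.val:ℤ)^2 + d*(b.val:ℤ)^2 + 2*d*(a.val:ℤ)*(b.val:ℤ))
        (by push_cast; ring) (by push_cast; ring)
        (by push_cast [ZMod.natCast_val, ZMod.cast_id]; ring)

lemma QQ_rep (p : ℕ) [NeZero p] (hodd : Odd p) (Q : ZMod p → AddCircle (2:ℚ))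
    (hQ : IsQuadraticForm Q) : ∃ d : ℤ, ∀ x, Q x = QQ p d x := by
  have hp : (p:ℚ) ≠ 0 := Nat.cast_ne_zero.mpr (NeZero.ne p)
  obtain ⟨hsm, B, hsymm, hbi, hpol⟩ := hQ
  let f : ZMod p →+ AddCircle (1:ℚ) := AddMonoidHom.mk' (fun a => B a 1) (fun a b => hbi a b 1)
  have hB0 : (p:ℤ) • B 1 1 = 0 := by
    have h1 : (p:ℤ) • B 1 1 = f ((p:ℤ) • (1:ZMod p)) := (f.map_zsmul (p:ℤ) 1).symm
    rw [h1, show ((p:ℤ) • (1 : ZMod p)) = 0 by rw [zsmul_eq_mul]; simp]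
    exact f.map_zero
  obtain ⟨c, hc⟩ := torsion_rep 1 p (by exact_mod_cast hp) (B 1 1) hB0
  have hQ0 : Q 0 = 0 := by simpa using hsm 0 0
  have h2 : (2:ℤ) • Q 1 = QZtoQ2Z (B 1 1) := by
    have e1 : Q (1 + 1) = Q 1 + Q 1 + QZtoQ2Z (B 1 1) := hpol 1 1
    have e2 : Q (1 + 1) = (4:ℤ) • Q 1 := by
      have h21 : ((2:ℤ) • (1 : ZMod p)) = 1 + 1 := by rw [zsmul_eq_mul]; push_cast; ring
      rw [← h21, hsm 2 1]; norm_num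
    rw [e2, ← two_zsmul] at e1
    have h42 : ((4:ℤ) - 2) • Q 1 = QZtoQ2Z (B 1 1) := by rw [sub_zsmul, e1, two_zsmul]; abel
    norm_num at h42
    exact h42
  obtain ⟨q1, hq1⟩ : ∃ q : ℚ, Q 1 = q := ⟨(Q 1).out, (QuotientAddGroup.out_eq' (Q 1)).symm⟩
  -- extract integer equation from h2
  have hc' : B 1 1 = ((c / p : ℚ) : AddCircle (1:ℚ)) := by
    rw [hc]; congr 1; push_cast; ring
  rw [hq1, hc', coe_zsmul', QZtoQ2Z_coe] at h2
  obtain ⟨t, ht⟩ := AddSubgroup.mem_zmultiples_iff.mp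
    ((QuotientAddGroup.eq_iff_sub_mem).mp h2)
  rw [zsmul_eq_mul] at ht
  -- ht : t * 2 = 2*q1 - 2*(c/p)
  have hq1t : q1 = c/p + t := by
    have : ((2:ℤ):ℚ) * q1 - 2*(c/p) = t*2 := by rw [← ht]
    field_simp at this ⊢
    push_cast at this; linear_combination this / 2
  -- p² q1 ∈ 2ℤ
  have hp2 : ((p:ℤ)^2) • Q 1 = 0 := by
    have := hsm (p:ℤ) 1
    rw [show (((p:ℤ)) • (1:ZMod p)) = 0 by rw [zsmul_eq_mul]; simp, hQ0] at this
    exact this.symm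
  rw [hq1, coe_zsmul'] at hp2
  obtain ⟨s, hs⟩ := AddSubgroup.mem_zmultiples_iff.mp ((QuotientAddGroup.eq_zero_iff _).mp hp2)
  rw [zsmul_eq_mul] at hs
  -- hs : s * 2 = p^2 * q1
  have hint : (p:ℤ)*c + (p:ℤ)^2*t = 2*s := by
    have h5 : ((p:ℚ))^2*((c:ℚ)/p + t) = (p:ℚ)*c + (p:ℚ)^2*t := by field_simp
    have h6 : (((p:ℤ)*c + (p:ℤ)^2*t : ℤ) : ℚ) = ((2*s : ℤ) : ℚ) := by
      push_cast at hs ⊢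
      rw [hq1t] at hs
      linarith [hs, h5]
    exact_mod_cast h6
  have hpodd : Odd (p:ℤ) := by exact_mod_cast hodd
  obtain ⟨r, hr⟩ := hpodd
  have heven : Even (c + (p:ℤ)*t) := by
    refine ⟨s - r*c - 2*r^2*t - r*t, ?_⟩
    rw [hr] at hint ⊢
    linear_combination hint
  obtain ⟨d, hd⟩ := heven
  refine ⟨d, fun x => ?_⟩
  have hx : ((x.val:ℤ)) • (1:ZMod p) = x := by rw [zsmul_eq_mul, mul_one]; exact cast_valZ p x
  have hq1d : q1 = 2*(d:ℚ)/p := by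
    have hdq : ((c:ℚ) + p*t) = 2*d := by exact_mod_cast (by omega : (c + (p:ℤ)*t : ℤ) = 2*d)
    rw [hq1t]
    field_simp
    linarith [hdq]
  have hQx := hsm ((x.val:ℤ)) 1
  rw [hx] at hQx
  rw [hQx, hq1, hq1d, coe_zsmul', QQ]
  congr 1
  push_cast
  ring

def mulAddEquiv (p : ℕ) [Fact p.Prime] (u : ZMod p) (hu : u ≠ 0) : ZMod p ≃+ ZMod p where
  toFun x := u * x
  invFun x := u⁻¹ * x
  left_inv x := by field_simp
  right_inv x := by field_simp
  map_add' := mul_add u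

@[simp] lemma mulAddEquiv_apply (p : ℕ) [Fact p.Prime] (u : ZMod p) (hu : u ≠ 0) (x : ZMod p) :
    mulAddEquiv p u hu x = u * x := rfl


theorem stmt_8 (p : ℕ) (hp : p.Prime) (hodd : Odd p) :
    ∃ (pm : ℕ) (Q0 Qp Qm : ZMod p → AddCircle (2 : ℚ)),
      ¬ IsSquare (pm : ZMod p) ∧
      IsQuadraticForm Q0 ∧ IsQuadraticForm Qp ∧ IsQuadraticForm Qm ∧
      Q0 1 = 0 ∧
      Qp 1 = ((2 / p : ℚ) : AddCircle (2 : ℚ)) ∧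
      Qm 1 = ((2 * pm / p : ℚ) : AddCircle (2 : ℚ)) ∧
      ∀ Q : ZMod p → AddCircle (2 : ℚ), IsQuadraticForm Q →
        ∃ φ : ZMod p ≃+ ZMod p,
          (∀ a, Q a = Q0 (φ a)) ∨ (∀ a, Q a = Qp (φ a)) ∨ (∀ a, Q a = Qm (φ a)) := by
  haveI : Fact p.Prime := ⟨hp⟩
  haveI : NeZero p := ⟨hp.ne_zero⟩
  haveI : Fact (1 < p) := ⟨hp.one_lt⟩
  have hchar : ringChar (ZMod p) ≠ 2 := by
    rw [ZMod.ringChar_zmod_n]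
    rintro rfl
    obtain ⟨k, hk⟩ := hodd
    omega
  obtain ⟨a, ha⟩ := FiniteField.exists_nonsquare (F := ZMod p) hchar
  have haval : ((a.val : ℕ) : ZMod p) = a := by simp [ZMod.natCast_val, ZMod.cast_id]
  refine ⟨a.val, QQ p 0, QQ p 1, QQ p (a.val : ℤ), by rwa [haval], QQ_isQF p 0, QQ_isQF p 1,
    QQ_isQF p (a.val:ℤ), ?_, ?_, ?_, ?_⟩
  · show ((2 * ((0:ℤ) * ((1:ZMod p).val : ℤ)^2) / p : ℚ) : AddCircle (2:ℚ)) = 0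
    norm_num
  · show ((2 * ((1:ℤ) * ((1:ZMod p).val : ℤ)^2) / p : ℚ) : AddCircle (2:ℚ)) = _
    congr 1
    rw [ZMod.val_one]
    norm_num
  · show ((2 * (((a.val:ℤ)) * ((1:ZMod p).val : ℤ)^2) / p : ℚ) : AddCircle (2:ℚ)) = _
    congr 1
    rw [ZMod.val_one]
    push_cast
    ring
  · intro Q hQ
    obtain ⟨d, hd⟩ := QQ_rep p hodd Q hQ
    by_cases h0 : (d : ZMod p) = 0
    · refine ⟨AddEquiv.refl _, Or.inl fun x => ?_⟩
      rw [hd x]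
      exact mkQ2_eq p _ _ (d * ((x.val:ℤ))^2) (0 * (((AddEquiv.refl (ZMod p)) x).val:ℤ)^2)
        (by push_cast; ring) (by push_cast; ring)
        (by push_cast [ZMod.natCast_val, ZMod.cast_id]; rw [h0]; simp)
    · by_cases hsq : IsSquare (d : ZMod p)
      · obtain ⟨u, hu⟩ := hsq
        have hu0 : u ≠ 0 := by rintro rfl; exact h0 (by rw [hu, mul_zero])
        refine ⟨mulAddEquiv p u hu0, Or.inr (Or.inl fun x => ?_)⟩
        rw [hd x]
        exact mkQ2_eq p _ _ (d * ((x.val:ℤ))^2) (1 * (((u * x).val:ℤ))^2)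
          (by push_cast; ring) (by simp only [mulAddEquiv_apply]; push_cast; ring)
          (by push_cast [ZMod.natCast_val, ZMod.cast_id]; rw [hu]; ring)
      · have ha0 : a ≠ 0 := by rintro rfl; exact ha (by simpa using (IsSquare.mul_self (0 : ZMod p)))
        have hsq2 : IsSquare ((d : ZMod p) * a⁻¹) := by
          have h1 : quadraticChar (ZMod p) (d : ZMod p) = -1 :=
            quadraticChar_neg_one_iff_not_isSquare.mpr hsq
          have h2 : quadraticChar (ZMod p) a = -1 :=
            quadraticChar_neg_one_iff_not_isSquare.mpr ha
          have h3 : quadraticChar (ZMod p) ((d:ZMod p) * a⁻¹) = 1 := by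
            rw [map_mul, h1]
            have : quadraticChar (ZMod p) a⁻¹ = -1 := by
              have h4 : quadraticChar (ZMod p) a⁻¹ * quadraticChar (ZMod p) a = 1 := by
                rw [← map_mul, inv_mul_cancel₀ ha0, map_one]
              rw [h2] at h4
              linarith
            rw [this]; ring
          exact (quadraticChar_one_iff_isSquare (mul_ne_zero h0 (inv_ne_zero ha0))).mp h3
        obtain ⟨u, hu⟩ := hsq2
        have hu0 : u ≠ 0 := by
          rintro rfl
          rw [mul_zero] at hu
          exact h0 (by
            have := hu
            field_simp at this
            simpa using this)
        have hda : (d : ZMod p) = a * (u * u) := by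
          field_simp at hu
          linear_combination hu
        refine ⟨mulAddEquiv p u hu0, Or.inr (Or.inr fun x => ?_)⟩
        rw [hd x]
        exact mkQ2_eq p _ _ (d * ((x.val:ℤ))^2) ((a.val:ℤ) * (((u * x).val:ℤ))^2)
          (by push_cast; ring) (by simp only [mulAddEquiv_apply]; push_cast; ring)
          (by push_cast [ZMod.natCast_val, ZMod.cast_id]; rw [hda]; ring)
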